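/- Let f : [0,1] → ℝ be a Lebesgue-measurable function and let ε > 0. Then there exists δ with 0 ≤ δ < ε such that for every t ∈ ℝ, the set { x ∈ [0,1] : f(x) + δ·x = t } has Lebesgue measure zero. -/

import Mathlib

open MeasureTheory

/-- The volume of a singleton in the unit interval is zero. -/
lemma singleton_volume_zero (c : ℝ) :
    volume {x : Set.Icc (0 : ℝ) 1 | (x : ℝ) = c} = 0 := by
  have emb : MeasurableEmbedding ((↑) : Set.Icc (0:ℝ) 1 → ℝ) :=
    MeasurableEmbedding.subtype_coe measurableSet_Icc
  have : volume {x : Set.Icc (0 : ℝ) 1 | (x : ℝ) = c}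
      = volume (((↑) : Set.Icc (0:ℝ) 1 → ℝ) '' {x | (x : ℝ) = c}) :=
    emb.comap_apply ..
  rw [this]
  refine measure_mono_null ?_ (measure_singleton c)
  rintro y ⟨x, hx, rfl⟩
  exact hx

/-- Claim inside the proof of Lemma 3.3: some perturbation `f + δ·id` has all level sets null. -/
theorem stmt11 (f : Set.Icc (0 : ℝ) 1 → ℝ) (hf : Measurable f) (ε : ℝ) (hε : 0 < ε) :
    ∃ δ : ℝ, 0 ≤ δ ∧ δ < ε ∧ ∀ t : ℝ,
      volume {x : Set.Icc (0 : ℝ) 1 | f x + δ * (x : ℝ) = t} = 0 := by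
  by_contra hcon
  push_neg at hcon
  -- choose a witness level for each δ in [0, ε)
  choose t ht using fun (δ : Set.Ico (0:ℝ) ε) => hcon δ δ.2.1 δ.2.2
  set A : Set.Ico (0:ℝ) ε → Set (Set.Icc (0:ℝ) 1) :=
    fun δ => {x | f x + (δ : ℝ) * (x : ℝ) = t δ} with hA
  have hmble : ∀ δ, MeasurableSet (A δ) := by
    intro δ
    have : A δ = (fun x : Set.Icc (0:ℝ) 1 => f x + (δ : ℝ) * (x : ℝ)) ⁻¹' {t δ} := by
      ext x; simp [hA]
    rw [this]
    exact (hf.add (measurable_const.mul measurable_subtype_coe))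
      (measurableSet_singleton _)
  have hdisj : Pairwise (Function.onFun (AEDisjoint volume) A) := by
    intro i j hij
    have hne : (i : ℝ) ≠ (j : ℝ) := fun h => hij (Subtype.ext h)
    refine measure_mono_null ?_
      (singleton_volume_zero ((t i - t j) / ((i : ℝ) - (j : ℝ))))
    rintro x ⟨hxi, hxj⟩
    simp only [hA, Set.mem_setOf_eq] at hxi hxj ⊢
    have h1 : ((i : ℝ) - (j : ℝ)) * (x : ℝ) = t i - t j := by linarith
    field_simp [sub_ne_zero.mpr hne]
    linarith
  have hcount : Set.Countable {δ : Set.Ico (0:ℝ) ε | 0 < volume (A δ)} :=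
    Measure.countable_meas_pos_of_disjoint_iUnion₀
      (fun δ => (hmble δ).nullMeasurableSet) hdisj
  have hall : {δ : Set.Ico (0:ℝ) ε | 0 < volume (A δ)} = Set.univ := by
    ext δ
    simp only [Set.mem_setOf_eq, Set.mem_univ, iff_true]
    exact (ht δ).bot_lt
  rw [hall] at hcount
  have : Set.Countable (Set.Ico (0:ℝ) ε) := by
    have h := hcount.image ((↑) : Set.Ico (0:ℝ) ε → ℝ)
    rwa [Set.image_univ, Subtype.range_coe] at h
  have hvol : volume (Set.Ico (0:ℝ) ε) = 0 := this.measure_zero _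
  rw [Real.volume_Ico, sub_zero, ENNReal.ofReal_eq_zero] at hvol
  linarith
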